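/- arXiv:1305.5312 — 6 statements merged into one kernel-verified Lean document; each statement's English description precedes it below -/
import Mathlib

section
/- Let X be a symmetric solution of the Riccati equation XF + FᵀX - X B R† Bᵀ X + Λ = 0, where Λ is symmetric positive semidefinite. Then ker X ⊆ ker Λ. -/
open Matrix

/-- `Rp` satisfies the four Penrose conditions for `R`. -/
def IsMoorePenrose {m : ℕ} (R Rp : Matrix (Fin m) (Fin m) ℝ) : Prop :=
  R * Rp * R = R ∧ Rp * R * Rp = Rp ∧ (R * Rp)ᵀ = R * Rp ∧ (Rp * R)ᵀ = Rp * R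

theorem kerX_subset_kerLambda {n m : ℕ}
    (F X Λ : Matrix (Fin n) (Fin n) ℝ) (B : Matrix (Fin n) (Fin m) ℝ)
    (R Rp : Matrix (Fin m) (Fin m) ℝ)
    (hR : R.PosSemidef) (hRp : IsMoorePenrose R Rp)
    (hΛ : Λ.PosSemidef) (hX : Xᵀ = X)
    (hric : X * F + Fᵀ * X - X * B * Rp * Bᵀ * X + Λ = 0) :
    ∀ v : Fin n → ℝ, X.mulVec v = 0 → Λ.mulVec v = 0 := by
  intro v hv
  rw [← hΛ.dotProduct_mulVec_zero_iff]
  have hs : (star v : Fin n → ℝ) = v := funext fun i => star_trivial _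
  have h0 : star v ⬝ᵥ (X * F + Fᵀ * X - X * B * Rp * Bᵀ * X + Λ) *ᵥ v = 0 := by
    rw [hric, zero_mulVec, dotProduct_zero]
  have h1 : (X * F) *ᵥ v = X *ᵥ (F *ᵥ v) := by rw [mulVec_mulVec]
  have h2 : star v ⬝ᵥ (X * F) *ᵥ v = 0 := by
    rw [h1, dotProduct_mulVec, hs, ← mulVec_transpose, hX, hv, zero_dotProduct]
  have h3 : star v ⬝ᵥ (Fᵀ * X) *ᵥ v = 0 := by
    rw [← mulVec_mulVec, hv, mulVec_zero, dotProduct_zero]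
  have h4 : star v ⬝ᵥ (X * B * Rp * Bᵀ * X) *ᵥ v = 0 := by
    rw [← mulVec_mulVec, hv, mulVec_zero, dotProduct_zero]
  simp only [add_mulVec, sub_mulVec, dotProduct_add, dotProduct_sub, h2, h3, h4] at h0
  linarith
end

section
/- Let X be a symmetric solution of XF + FᵀX - X B R† Bᵀ X + Λ = 0 with Λ symmetric positive semidefinite. Then ker X is invariant under F, i.e., F(ker X) ⊆ ker X. -/
open Matrix

theorem kerX_F_invariant {n m : ℕ}
    (F X Λ : Matrix (Fin n) (Fin n) ℝ) (B : Matrix (Fin n) (Fin m) ℝ)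
    (R Rp : Matrix (Fin m) (Fin m) ℝ)
    (hR : R.PosSemidef) (hRp : IsMoorePenrose R Rp)
    (hΛ : Λ.PosSemidef) (hX : Xᵀ = X)
    (hric : X * F + Fᵀ * X - X * B * Rp * Bᵀ * X + Λ = 0) :
    ∀ v : Fin n → ℝ, X.mulVec v = 0 → X.mulVec (F.mulVec v) = 0 := by
  intro v hv
  have h1 : (X * F + Fᵀ * X - X * B * Rp * Bᵀ * X + Λ).mulVec v = 0 := by
    rw [hric, zero_mulVec]
  have e1 : (X * F).mulVec v = X.mulVec (F.mulVec v) := by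
    rw [← mulVec_mulVec]
  have e2 : (Fᵀ * X).mulVec v = 0 := by
    rw [← mulVec_mulVec, hv, mulVec_zero]
  have e3 : (X * B * Rp * Bᵀ * X).mulVec v = 0 := by
    rw [← mulVec_mulVec, hv, mulVec_zero]
  have h2 : X.mulVec (F.mulVec v) + Λ.mulVec v = 0 := by
    have := h1
    rw [add_mulVec, sub_mulVec, add_mulVec, e1, e2, e3] at this
    simpa using this
  have hdot : v ⬝ᵥ Λ.mulVec v = 0 := by
    have hd : v ⬝ᵥ (X.mulVec (F.mulVec v) + Λ.mulVec v) = 0 := by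
      rw [h2, dotProduct_zero]
    have hXF : v ⬝ᵥ X.mulVec (F.mulVec v) = 0 := by
      rw [dotProduct_mulVec, ← mulVec_transpose, hX, hv, zero_dotProduct]
    rw [dotProduct_add, hXF, zero_add] at hd
    exact hd
  have hΛv : Λ.mulVec v = 0 := by
    have := (hΛ.dotProduct_mulVec_zero_iff v).mp (by simpa using hdot)
    exact this
  have := h2
  rw [hΛv, add_zero] at this
  exact this
end

section
/- Let X be a symmetric solution of XF + FᵀX - X B R† Bᵀ X + Λ = 0 with Λ ⪰ 0, and suppose im B₂ ⊆ ker X for a matrix B₂. Then the reachable subspace R(F, B₂) = im B₂ + F·im B₂ + ... + F^{n-1}·im B₂ satisfies X·R(F,B₂) = {0}. -/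
open Matrix

theorem X_annihilates_reachable_subspace {n m k : ℕ}
    (F X Λ : Matrix (Fin n) (Fin n) ℝ) (B : Matrix (Fin n) (Fin m) ℝ)
    (B₂ : Matrix (Fin n) (Fin k) ℝ)
    (R Rp : Matrix (Fin m) (Fin m) ℝ)
    (hR : R.PosSemidef) (hRp : IsMoorePenrose R Rp)
    (hΛ : Λ.PosSemidef) (hX : Xᵀ = X)
    (hric : X * F + Fᵀ * X - X * B * Rp * Bᵀ * X + Λ = 0)
    (hB₂ : X * B₂ = 0) :
    ∀ i < n, X * (F ^ i * B₂) = 0 := by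
  have key : ∀ (M : Matrix (Fin n) (Fin k) ℝ), X * M = 0 → X * (F * M) = 0 := by
    intro M hM
    have hXM' : Mᵀ * X = 0 := by
      have := congrArg Matrix.transpose hM
      simpa [Matrix.transpose_mul, hX] using this
    have h1 : X * F * M + Λ * M = 0 := by
      have h := congrArg (· * M) hric
      simp only [Matrix.add_mul, Matrix.sub_mul, Matrix.zero_mul] at h
      have e1 : Fᵀ * X * M = 0 := by rw [Matrix.mul_assoc, hM, Matrix.mul_zero]
      have e2 : X * B * Rp * Bᵀ * X * M = 0 := by
        rw [Matrix.mul_assoc, hM, Matrix.mul_zero]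
      rw [e1, e2] at h
      simpa using h
    have h2 : Mᵀ * Λ * M = 0 := by
      have h := congrArg (Mᵀ * ·) h1
      simp only [Matrix.mul_add, Matrix.mul_zero] at h
      have e3 : Mᵀ * (X * F * M) = 0 := by
        rw [show X * F * M = X * (F * M) from Matrix.mul_assoc _ _ _,
          ← Matrix.mul_assoc, hXM', Matrix.zero_mul]
      rw [e3, zero_add, ← Matrix.mul_assoc] at h
      exact h
    have hΛM : Λ * M = 0 := by
      obtain ⟨S, hs, hsym⟩ : ∃ S : Matrix (Fin n) (Fin n) ℝ, S * S = Λ ∧ Sᴴ = S := by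
        open scoped MatrixOrder in
        exact ⟨CFC.sqrt Λ, CFC.sqrt_mul_sqrt_self Λ hΛ.nonneg,
          (CFC.sqrt_nonneg Λ).posSemidef.isHermitian⟩
      have h3 : (S * M)ᴴ * (S * M) = 0 := by
        calc (S * M)ᴴ * (S * M)
            = Mᴴ * (S * S) * M := by
              rw [Matrix.conjTranspose_mul, hsym]
              rw [Matrix.mul_assoc, Matrix.mul_assoc, Matrix.mul_assoc]
          _ = Mᵀ * Λ * M := by
              rw [hs, show Mᴴ = Mᵀ from by ext i j; simp]
          _ = 0 := h2
      have h4 : S * M = 0 :=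
        (Matrix.conjTranspose_mul_self_eq_zero).mp h3
      calc Λ * M = S * (S * M) := by rw [← Matrix.mul_assoc, hs]
        _ = 0 := by rw [h4, Matrix.mul_zero]
    have : X * F * M = 0 := by
      have := h1
      rw [hΛM, add_zero] at this
      exact this
    rw [← Matrix.mul_assoc]
    exact this
  intro i _
  induction i with
  | zero => simpa using hB₂
  | succ j ih =>
      have hj : X * (F ^ j * B₂) = 0 := ih (by omega)
      have : X * (F * (F ^ j * B₂)) = 0 := key _ hj
      rw [pow_succ']
      rw [Matrix.mul_assoc F]
      exact this
end

section
/- Let X be a symmetric solution of XF + FᵀX - X B R† Bᵀ X + Λ = 0 with Λ ⪰ 0, and suppose im B₂ ⊆ ker X. Then Λ annihilates the reachable subspace: Λ·R(F,B₂) = {0}. -/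
open Matrix

open scoped MatrixOrder in
lemma psd_ann {n k : ℕ} {Λ : Matrix (Fin n) (Fin n) ℝ} (hΛ : Λ.PosSemidef)
    (M : Matrix (Fin n) (Fin k) ℝ) (h : Mᵀ * Λ * M = 0) : Λ * M = 0 := by
  have hs := (CFC.sqrt_nonneg Λ).posSemidef
  have hsq : CFC.sqrt Λ * CFC.sqrt Λ = Λ := by rw [← pow_two]; exact CFC.sq_sqrt Λ hΛ.nonneg
  have hsym : (CFC.sqrt Λ)ᴴ = CFC.sqrt Λ := hs.isHermitian
  have h2 : (CFC.sqrt Λ * M)ᴴ * (CFC.sqrt Λ * M) = 0 := by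
    rw [conjTranspose_mul, hsym]
    calc Mᴴ * CFC.sqrt Λ * (CFC.sqrt Λ * M) = Mᴴ * (CFC.sqrt Λ * CFC.sqrt Λ) * M := by
          rw [Matrix.mul_assoc, Matrix.mul_assoc, Matrix.mul_assoc]
      _ = 0 := by rw [hsq]; simpa [Matrix.mul_assoc] using h
  have h3 : CFC.sqrt Λ * M = 0 := by
    rwa [conjTranspose_mul_self_eq_zero] at h2
  calc Λ * M = CFC.sqrt Λ * (CFC.sqrt Λ * M) := by rw [← Matrix.mul_assoc, hsq]
    _ = 0 := by rw [h3, Matrix.mul_zero]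

lemma riccati_step {n m k : ℕ}
    {F X Λ : Matrix (Fin n) (Fin n) ℝ} {B : Matrix (Fin n) (Fin m) ℝ}
    {Rp : Matrix (Fin m) (Fin m) ℝ}
    (hΛ : Λ.PosSemidef) (hX : Xᵀ = X)
    (hric : X * F + Fᵀ * X - X * B * Rp * Bᵀ * X + Λ = 0)
    {M : Matrix (Fin n) (Fin k) ℝ} (hM : X * M = 0) :
    Λ * M = 0 ∧ X * (F * M) = 0 := by
  have hMT : Mᵀ * X = 0 := by
    have := congrArg Matrix.transpose hM
    simpa [Matrix.transpose_mul, hX] using this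
  have hricM : X * F * M + Fᵀ * (X * M) - X * B * Rp * Bᵀ * (X * M) + Λ * M = 0 := by
    have := congrArg (· * M) hric
    simpa [Matrix.add_mul, Matrix.sub_mul, Matrix.zero_mul, Matrix.mul_assoc] using this
  rw [hM, Matrix.mul_zero, Matrix.mul_zero, sub_zero, add_zero] at hricM
  -- hricM : X * F * M + Λ * M = 0
  have hΛM : Λ * M = 0 := by
    apply psd_ann hΛ
    have := congrArg (Mᵀ * ·) hricM
    have h1 : Mᵀ * (X * (F * M)) = 0 := by
      rw [← Matrix.mul_assoc, hMT, Matrix.zero_mul]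
    simpa [Matrix.mul_add, h1, Matrix.mul_assoc] using this
  refine ⟨hΛM, ?_⟩
  rw [hΛM, add_zero] at hricM
  rw [← Matrix.mul_assoc]
  exact hricM

theorem Lambda_annihilates_reachable_subspace {n m k : ℕ}
    (F X Λ : Matrix (Fin n) (Fin n) ℝ) (B : Matrix (Fin n) (Fin m) ℝ)
    (B₂ : Matrix (Fin n) (Fin k) ℝ)
    (R Rp : Matrix (Fin m) (Fin m) ℝ)
    (hR : R.PosSemidef) (hRp : IsMoorePenrose R Rp)
    (hΛ : Λ.PosSemidef) (hX : Xᵀ = X)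
    (hric : X * F + Fᵀ * X - X * B * Rp * Bᵀ * X + Λ = 0)
    (hB₂ : X * B₂ = 0) :
    ∀ i < n, Λ * (F ^ i * B₂) = 0 := by
  suffices h : ∀ i : ℕ, X * (F ^ i * B₂) = 0 by
    intro i _
    exact (riccati_step hΛ hX hric (h i)).1
  intro i
  induction i with
  | zero => simpa using hB₂
  | succ i ih =>
    have := (riccati_step hΛ hX hric ih).2
    rw [pow_succ']
    simpa [Matrix.mul_assoc] using this
end

section
/- Let Π = [[Q,S],[Sᵀ,R]] be symmetric positive semidefinite and let P be a symmetric matrix with ker R ⊆ ker(PB + S). Then the matrix [[ (PB+S)R†(Sᵀ+BᵀP), PB+S ],[ Sᵀ+BᵀP, R ]] factors as N Nᵀ where N = [[ (PB+S)R†R^{1/2} ],[ R^{1/2} ]]; in particular this matrix is positive semidefinite. -/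
open Matrix

theorem completed_square_factorisation {n m : ℕ}
    (Q P : Matrix (Fin n) (Fin n) ℝ) (B S : Matrix (Fin n) (Fin m) ℝ)
    (R Rp Rh : Matrix (Fin m) (Fin m) ℝ)
    (hR : R.PosSemidef)
    (hRp : IsMoorePenrose R Rp)
    (hRh : Rh.PosSemidef ∧ Rh * Rh = R)
    (hP : Pᵀ = P)
    (hker : ∀ v : Fin m → ℝ, R.mulVec v = 0 → (P * B + S).mulVec v = 0) :
    Matrix.fromBlocks
        ((P * B + S) * Rp * (Sᵀ + Bᵀ * P)) (P * B + S)
        (Sᵀ + Bᵀ * P) R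
      = Matrix.fromRows ((P * B + S) * Rp * Rh) Rh *
          (Matrix.fromRows ((P * B + S) * Rp * Rh) Rh)ᵀ ∧
    (Matrix.fromBlocks
        ((P * B + S) * Rp * (Sᵀ + Bᵀ * P)) (P * B + S)
        (Sᵀ + Bᵀ * P) R).PosSemidef := by
  obtain ⟨h1, h2, h3, h4⟩ := hRp
  obtain ⟨hRhps, hRh2⟩ := hRh
  have hRT : Rᵀ = R := by
    rw [← Matrix.conjTranspose_eq_transpose_of_trivial]; exact hR.isHermitian
  have hRhT : Rhᵀ = Rh := by
    rw [← Matrix.conjTranspose_eq_transpose_of_trivial]; exact hRhps.isHermitian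
  have hRpTR : Rpᵀ * R = R * Rp := by
    rw [← hRT, ← Matrix.transpose_mul, h3, hRT]
  have hRRpT : R * Rpᵀ = Rp * R := by
    rw [← hRT, ← Matrix.transpose_mul, h4, hRT]
  have p1 : R * (Rpᵀ * R) = R := by
    have := congrArg Matrix.transpose h1
    simpa [Matrix.transpose_mul, hRT, Matrix.mul_assoc] using this
  have p1' : R * Rpᵀ * R = R := by rw [Matrix.mul_assoc]; exact p1
  have hsymV : (R * Rpᵀ)ᵀ = R * Rpᵀ := by
    rw [Matrix.transpose_mul, Matrix.transpose_transpose, hRT, hRRpT]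
  have hsymU : (Rpᵀ * R)ᵀ = Rpᵀ * R := by
    rw [Matrix.transpose_mul, Matrix.transpose_transpose, hRT, hRpTR]
  have e1 : R * Rp = R * Rpᵀ := by
    have c1 : (R * Rp) * (R * Rpᵀ) = R * Rpᵀ := by
      have : (R * Rp) * (R * Rpᵀ) = (R * Rp * R) * Rpᵀ := by
        simp only [Matrix.mul_assoc]
      rw [this, h1]
    have c2 : (R * Rp) * (R * Rpᵀ) = R * Rp := by
      calc (R * Rp) * (R * Rpᵀ) = (R * Rp)ᵀ * (R * Rpᵀ)ᵀ := by rw [h3, hsymV]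
        _ = ((R * Rpᵀ) * (R * Rp))ᵀ := (Matrix.transpose_mul (R * Rpᵀ) (R * Rp)).symm
        _ = ((R * Rpᵀ * R) * Rp)ᵀ := by simp only [Matrix.mul_assoc]
        _ = (R * Rp)ᵀ := by rw [p1']
        _ = R * Rp := h3
    exact c2.symm.trans c1
  have e2 : Rp * R = Rpᵀ * R := by
    have d1 : (Rp * R) * (Rpᵀ * R) = Rp * R := by
      have : (Rp * R) * (Rpᵀ * R) = Rp * (R * (Rpᵀ * R)) := by
        simp only [Matrix.mul_assoc]
      rw [this, p1]
    have d2 : (Rp * R) * (Rpᵀ * R) = Rpᵀ * R := by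
      calc (Rp * R) * (Rpᵀ * R) = (Rp * R)ᵀ * (Rpᵀ * R)ᵀ := by rw [h4, hsymU]
        _ = ((Rpᵀ * R) * (Rp * R))ᵀ := (Matrix.transpose_mul (Rpᵀ * R) (Rp * R)).symm
        _ = ((Rpᵀ * (R * Rp * R)))ᵀ := by simp only [Matrix.mul_assoc]
        _ = (Rpᵀ * R)ᵀ := by rw [h1]
        _ = Rpᵀ * R := hsymU
    exact d1.symm.trans d2
  have hRpT : Rpᵀ = Rp := by
    have p2 : Rpᵀ * (R * Rpᵀ) = Rpᵀ := by
      have := congrArg Matrix.transpose h2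
      simpa [Matrix.transpose_mul, hRT, Matrix.mul_assoc] using this
    calc Rpᵀ = Rpᵀ * (R * Rpᵀ) := p2.symm
      _ = (Rpᵀ * R) * Rpᵀ := by rw [Matrix.mul_assoc]
      _ = (Rp * R) * Rpᵀ := by rw [← e2]
      _ = Rp * (R * Rpᵀ) := by rw [Matrix.mul_assoc]
      _ = Rp * (R * Rp) := by rw [← e1]
      _ = Rp * R * Rp := by rw [Matrix.mul_assoc]
      _ = Rp := h2
  set A := P * B + S with hA
  have key : A * (Rp * R) = A := by
    have hz : A * (Rp * R - 1) = 0 := by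
      ext i j
      have hv : R.mulVec ((Rp * R - 1).mulVec (Pi.single j 1)) = 0 := by
        rw [Matrix.mulVec_mulVec]
        have hz0 : R * (Rp * R - 1) = 0 := by
          rw [Matrix.mul_sub, Matrix.mul_one, ← Matrix.mul_assoc, h1, sub_self]
        rw [hz0, Matrix.zero_mulVec]
      have h' := congrFun (hker _ hv) i
      rw [Matrix.mulVec_mulVec] at h'
      simpa [Matrix.mulVec_single] using h'
    rw [Matrix.mul_sub, Matrix.mul_one, sub_eq_zero] at hz
    exact hz
  have hAT : Sᵀ + Bᵀ * P = Aᵀ := by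
    rw [hA, Matrix.transpose_add, Matrix.transpose_mul, hP, add_comm]
  have b11 : (A * Rp * Rh) * (A * Rp * Rh)ᵀ = A * Rp * Aᵀ := by
    calc (A * Rp * Rh) * (A * Rp * Rh)ᵀ
        = (A * Rp * Rh) * (Rh * (Rp * Aᵀ)) := by
          simp only [Matrix.transpose_mul, hRhT, hRpT, Matrix.mul_assoc]
      _ = (A * (Rp * R)) * (Rp * Aᵀ) := by
          rw [← hRh2]; simp only [Matrix.mul_assoc]
      _ = A * (Rp * Aᵀ) := by rw [key]
      _ = A * Rp * Aᵀ := by rw [Matrix.mul_assoc]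
  have b12 : (A * Rp * Rh) * Rhᵀ = A := by
    rw [hRhT]
    calc (A * Rp * Rh) * Rh = A * (Rp * (Rh * Rh)) := by simp only [Matrix.mul_assoc]
      _ = A * (Rp * R) := by rw [hRh2]
      _ = A := key
  have b21 : Rh * (A * Rp * Rh)ᵀ = Aᵀ := by
    have := congrArg Matrix.transpose b12
    simpa [Matrix.transpose_mul, Matrix.transpose_transpose, hRhT, hRpT,
      Matrix.mul_assoc] using this
  have b22 : Rh * Rhᵀ = R := by rw [hRhT, hRh2]
  have hfact : Matrix.fromBlocks (A * Rp * Aᵀ) A Aᵀ R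
      = Matrix.fromRows (A * Rp * Rh) Rh * (Matrix.fromRows (A * Rp * Rh) Rh)ᵀ := by
    rw [Matrix.transpose_fromRows, Matrix.fromRows_mul_fromCols, b11, b12, b21, b22]
  constructor
  · rw [hAT]; exact hfact
  · rw [hAT, hfact]
    have hps := Matrix.posSemidef_self_mul_conjTranspose
      (Matrix.fromRows (A * Rp * Rh) Rh)
    rwa [Matrix.conjTranspose_eq_transpose_of_trivial] at hps
end

section
/- Let X be a symmetric solution of the CGCARE (with constraint ker R ⊆ ker(XB), given ker R ⊆ ker S). Set A₀ = A - BR†Sᵀ and Q₀ = Q - SR†Sᵀ ⪰ 0. Then ker X ⊆ ker Q₀ and ker X is A₀-invariant; consequently the reachable subspace R(A₀, BG) of the pair (A₀, BG), with G = I - R†R, satisfies R(A₀, BG) ⊆ ker X ⊆ ker Q₀. -/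
open Matrix

private lemma mul_eq_zero_iff_cols {l k : Type*} [Fintype l] [Fintype k]
    (X : Matrix l l ℝ) (M : Matrix l k ℝ) :
    X * M = 0 ↔ ∀ j, X.mulVec (fun i => M i j) = 0 := by
  constructor
  · intro h j
    funext i
    have := congrFun (congrFun h i) j
    simpa [Matrix.mul_apply, Matrix.mulVec, dotProduct] using this
  · intro h
    ext i j
    have := congrFun (h j) i
    simpa [Matrix.mul_apply, Matrix.mulVec, dotProduct] using this

/-- If `P` is PSD and `Kᵀ P K = 0` then `P K = 0`. -/
private lemma psd_mul_eq_zero {l k : Type*} [Fintype l] [Fintype k] [DecidableEq l]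
    {P : Matrix l l ℝ} (hP : P.PosSemidef) {K : Matrix l k ℝ}
    (h : Kᵀ * P * K = 0) : P * K = 0 := by
  rw [mul_eq_zero_iff_cols]
  intro j
  have hq : (fun i => K i j) ⬝ᵥ P.mulVec (fun i => K i j) = 0 := by
    have := congrFun (congrFun h j) j
    simp only [Matrix.mul_apply, Matrix.mulVec, dotProduct, Finset.mul_sum,
      Finset.sum_mul, Matrix.zero_apply] at this ⊢
    rw [Finset.sum_comm] at this
    convert this using 2 with x
    exact Finset.sum_congr rfl fun y _ => by simp [Matrix.transpose_apply]; ring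
  exact (hP.dotProduct_mulVec_zero_iff (fun i => K i j)).mp (by simpa using hq)

theorem kerX_properties_and_reachable {n m : ℕ}
    (A Q X : Matrix (Fin n) (Fin n) ℝ) (B S : Matrix (Fin n) (Fin m) ℝ)
    (R Rp : Matrix (Fin m) (Fin m) ℝ)
    (A₀ Q₀ : Matrix (Fin n) (Fin n) ℝ) (G : Matrix (Fin m) (Fin m) ℝ)
    (hPi : (Matrix.fromBlocks Q S Sᵀ R).PosSemidef)
    (hRp : IsMoorePenrose R Rp)
    (hA₀ : A₀ = A - B * Rp * Sᵀ) (hQ₀ : Q₀ = Q - S * Rp * Sᵀ)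
    (hG : G = 1 - Rp * R)
    (hX : Xᵀ = X)
    (hric : X * A₀ + A₀ᵀ * X - X * B * Rp * Bᵀ * X + Q₀ = 0)
    (hXBG : X * B * G = 0) :
    (∀ v : Fin n → ℝ, X.mulVec v = 0 → Q₀.mulVec v = 0) ∧
    (∀ v : Fin n → ℝ, X.mulVec v = 0 → X.mulVec (A₀.mulVec v) = 0) ∧
    (∀ i < n, X * (A₀ ^ i * (B * G)) = 0 ∧ Q₀ * (A₀ ^ i * (B * G)) = 0) := by
  -- R * G = 0
  have hRG : R * G = 0 := by
    rw [hG, Matrix.mul_sub, Matrix.mul_one, ← Matrix.mul_assoc, hRp.1, sub_self]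
  -- S * G = 0
  have hSG : S * G = 0 := by
    set K : Matrix (Fin n ⊕ Fin m) (Fin n ⊕ Fin m) ℝ := Matrix.fromBlocks 0 0 0 G with hK
    have hPK : Matrix.fromBlocks Q S Sᵀ R * K = Matrix.fromBlocks 0 (S * G) 0 0 := by
      rw [hK, Matrix.fromBlocks_multiply]
      simp [hRG]
    have hKPK : Kᵀ * (Matrix.fromBlocks Q S Sᵀ R) * K = 0 := by
      rw [Matrix.mul_assoc, hPK, hK, Matrix.fromBlocks_transpose, Matrix.fromBlocks_multiply]
      simp
    have := psd_mul_eq_zero hPi hKPK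
    rw [hPK] at this
    have := congrArg Matrix.toBlocks₁₂ this
    ext i j
    simpa [Matrix.toBlocks₁₂] using congrFun (congrFun this i) j
  have hSRpR : S * Rp * R = S := by
    rw [hG] at hSG
    rw [Matrix.mul_sub, Matrix.mul_one, sub_eq_zero] at hSG
    rw [Matrix.mul_assoc]
    exact hSG.symm
  -- Q₀ is positive semidefinite
  have hQ₀psd : Q₀.PosSemidef := by
    set L : Matrix (Fin n ⊕ Fin m) (Fin n ⊕ Fin m) ℝ :=
      Matrix.fromBlocks 1 (-(S * Rp)) 0 0 with hL
    have hLP : L * Matrix.fromBlocks Q S Sᵀ R = Matrix.fromBlocks Q₀ 0 0 0 := by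
      rw [hL, Matrix.fromBlocks_multiply, hQ₀]
      refine Matrix.ext fun i j => ?_
      cases i <;> cases j <;>
        simp [Matrix.fromBlocks, Matrix.neg_mul, ← Matrix.mul_assoc, hSRpR, sub_eq_add_neg]
    have hpsd : (L * Matrix.fromBlocks Q S Sᵀ R * Lᴴ).PosSemidef :=
      hPi.mul_mul_conjTranspose_same L
    have hLPL : L * Matrix.fromBlocks Q S Sᵀ R * Lᴴ = Matrix.fromBlocks Q₀ 0 0 0 := by
      rw [hLP, hL]
      rw [show (Matrix.fromBlocks 1 (-(S * Rp)) 0 0 : Matrix (Fin n ⊕ Fin m) (Fin n ⊕ Fin m) ℝ)ᴴ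
          = Matrix.fromBlocks 1ᴴ 0ᴴ (-(S * Rp))ᴴ 0ᴴ from Matrix.fromBlocks_conjTranspose _ _ _ _]
      rw [Matrix.fromBlocks_multiply]
      simp
    rw [hLPL] at hpsd
    have hsub := hpsd.submatrix Sum.inl
    have : (Matrix.fromBlocks Q₀ 0 0 0 :
        Matrix (Fin n ⊕ Fin m) (Fin n ⊕ Fin m) ℝ).submatrix Sum.inl Sum.inl = Q₀ := by
      ext i j; rfl
    rwa [this] at hsub
  -- key identity
  have key : ∀ v : Fin n → ℝ, X.mulVec v = 0 →
      X.mulVec (A₀.mulVec v) + Q₀.mulVec v = 0 := by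
    intro v hv
    have h0 : (X * A₀ + A₀ᵀ * X - X * B * Rp * Bᵀ * X + Q₀) *ᵥ v = 0 := by
      rw [hric]; simp
    simp only [Matrix.add_mulVec, Matrix.sub_mulVec, ← Matrix.mulVec_mulVec] at h0
    rw [hv] at h0
    simpa using h0
  have P1 : ∀ v : Fin n → ℝ, X.mulVec v = 0 → Q₀.mulVec v = 0 := by
    intro v hv
    have hk := key v hv
    have hvX : v ᵥ* X = 0 := by
      rw [← hX, Matrix.vecMul_transpose, hv]
    have hdot : v ᵥ* Q₀ ⬝ᵥ v = 0 := by
      have h2 := congrArg (fun w => v ⬝ᵥ w) hk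
      simp only [dotProduct_add, dotProduct_zero] at h2
      rw [Matrix.dotProduct_mulVec, hvX, zero_dotProduct, zero_add,
        Matrix.dotProduct_mulVec] at h2
      exact h2
    exact (hQ₀psd.dotProduct_mulVec_zero_iff v).mp
      (by simpa [Matrix.dotProduct_mulVec] using hdot)
  have P2 : ∀ v : Fin n → ℝ, X.mulVec v = 0 → X.mulVec (A₀.mulVec v) = 0 := by
    intro v hv
    have hk := key v hv
    rw [P1 v hv, add_zero] at hk
    exact hk
  refine ⟨P1, P2, ?_⟩
  have hcol : ∀ (M : Matrix (Fin n) (Fin m) ℝ) (j : Fin m),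
      (fun k => (A₀ * M) k j) = A₀.mulVec (fun k => M k j) := by
    intro M j
    funext k
    simp [Matrix.mul_apply, Matrix.mulVec, dotProduct]
  have main : ∀ i : ℕ, X * (A₀ ^ i * (B * G)) = 0 ∧ Q₀ * (A₀ ^ i * (B * G)) = 0 := by
    intro i
    induction i with
    | zero =>
      have h1 : X * (A₀ ^ 0 * (B * G)) = 0 := by
        simp only [pow_zero, Matrix.one_mul, ← Matrix.mul_assoc]
        exact hXBG
      refine ⟨h1, ?_⟩
      rw [mul_eq_zero_iff_cols] at h1 ⊢
      exact fun j => P1 _ (h1 j)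
    | succ i ih =>
      have h1 : X * (A₀ ^ (i + 1) * (B * G)) = 0 := by
        rw [pow_succ', Matrix.mul_assoc]
        rw [mul_eq_zero_iff_cols]
        intro j
        rw [hcol]
        exact P2 _ ((mul_eq_zero_iff_cols X _).mp ih.1 j)
      refine ⟨h1, ?_⟩
      rw [mul_eq_zero_iff_cols] at h1 ⊢
      exact fun j => P1 _ (h1 j)
  exact fun i _ => main i
end
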